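/- There is a bijection between (isomorphism classes of) split graphs on n vertices and (isomorphism classes of) XY-graphs on n vertices in which no vertex of Y is isolated, given by taking an S-max KS-partition, setting X = S, Y = K, and deleting all edges within K; the inverse adds back all edges within Y. -/

import Mathlib

open SimpleGraph
attribute [local instance] Classical.propDecidable

variable {V : Type*} [Fintype V] [DecidableEq V]

/-- A set of vertices is stable (independent) if no two of its elements are adjacent. -/
def IsStableSet (G : SimpleGraph V) (s : Set V) : Prop :=
  s.Pairwise fun a b => ¬ G.Adj a b

/-- The clique number ω(G). -/
noncomputable def omegaNum (G : SimpleGraph V) : ℕ :=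
  Finset.univ.sup fun s : Finset V => if G.IsClique (s : Set V) then s.card else 0

/-- The independence number α(G). -/
noncomputable def alphaNum (G : SimpleGraph V) : ℕ :=
  Finset.univ.sup fun s : Finset V => if IsStableSet G (s : Set V) then s.card else 0

/-- A KS-partition of `G`: a partition of the vertex set into a clique `K` and a stable set `S`. -/
def IsKSPartition (G : SimpleGraph V) (K S : Finset V) : Prop :=
  Disjoint K S ∧ K ∪ S = Finset.univ ∧ G.IsClique (K : Set V) ∧ IsStableSet G (S : Set V)

/-- `G` is a split graph. -/
def IsSplit (G : SimpleGraph V) : Prop := ∃ K S : Finset V, IsKSPartition G K S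

/-- A split graph is balanced if it has a KS-partition with `|K| = ω(G)` and `|S| = α(G)`. -/
def IsBalanced (G : SimpleGraph V) : Prop :=
  ∃ K S : Finset V, IsKSPartition G K S ∧ K.card = omegaNum G ∧ S.card = alphaNum G

/-- An XY-graph on `Fin n`: a bipartite graph with a specified bipartition, whose
distinguished part is `X` (the other part `Y` being the complement of `X`). -/
structure XYGraph (n : ℕ) where
  G : SimpleGraph (Fin n)
  X : Finset (Fin n)
  bip : ∀ u v : Fin n, G.Adj u v → (u ∈ X ∧ v ∉ X) ∨ (u ∉ X ∧ v ∈ X)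

/-- No vertex of `Y` (the complement of `X`) is isolated. -/
def NoIsolateY {n : ℕ} (A : XYGraph n) : Prop :=
  ∀ v : Fin n, v ∉ A.X → ∃ u ∈ A.X, A.G.Adj u v

/-- `X` contains a universal vertex: one adjacent to every vertex of `Y`. -/
def HasUniversalX {n : ℕ} (A : XYGraph n) : Prop :=
  ∃ x ∈ A.X, ∀ y : Fin n, y ∉ A.X → A.G.Adj x y

/-- Isomorphism of XY-graphs with no isolates in Y. -/
def XYnRel (n : ℕ) (A B : {A : XYGraph n // NoIsolateY A}) : Prop :=
  ∃ e : A.1.G ≃g B.1.G, ∀ v : Fin n, v ∈ A.1.X ↔ e v ∈ B.1.X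

/-- Isomorphism of split graphs on `Fin n`. -/
def SplitIsoRel (n : ℕ) (G H : {G : SimpleGraph (Fin n) // IsSplit G}) : Prop :=
  Nonempty (G.1 ≃g H.1)

section Aux

/-- The completion of an XY-graph: add all edges within `Y = Xᶜ`. -/
def compG {n : ℕ} (A : XYGraph n) : SimpleGraph (Fin n) where
  Adj u v := A.G.Adj u v ∨ (u ≠ v ∧ u ∉ A.X ∧ v ∉ A.X)
  symm := by
    constructor
    intro u v h
    rcases h with h | ⟨h1, h2, h3⟩
    · exact Or.inl h.symm
    · exact Or.inr ⟨h1.symm, h3, h2⟩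
  loopless := by
    constructor
    intro u h
    rcases h with h | ⟨h1, _⟩
    · exact A.G.loopless.irrefl u h
    · exact h1 rfl

/-- The XY-graph derived from a graph `G` and a set `S`: keep only edges with
exactly one endpoint in `S`, and set `X = S`. -/
def derXY {n : ℕ} (G : SimpleGraph (Fin n)) (S : Finset (Fin n)) : XYGraph n where
  G := { Adj := fun u v => G.Adj u v ∧ ¬ (u ∈ S ↔ v ∈ S)
         symm := by
           constructor
           intro u v h
           exact ⟨h.1.symm, fun hh => h.2 hh.symm⟩
         loopless := by
           constructor
           intro u h
           exact G.loopless.irrefl u h.1 }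
  X := S
  bip := by
    intro u v h
    have h2 := h.2
    by_cases hu : u ∈ S <;> by_cases hv : v ∈ S <;> tauto

lemma memc {n : ℕ} {S : Finset (Fin n)} {x : Fin n} (hx : x ∉ S) :
    x ∈ ((Sᶜ : Finset (Fin n)) : Set (Fin n)) := by
  simpa using hx

lemma compl_union_self' {n : ℕ} (S : Finset (Fin n)) : Sᶜ ∪ S = Finset.univ := by
  ext x
  by_cases h : x ∈ S <;> simp [h]

lemma compG_stableX {n : ℕ} (A : XYGraph n) :
    IsStableSet (compG A) (A.X : Set (Fin n)) := by
  intro u hu v hv _ hadj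
  rcases hadj with h | ⟨_, h2, _⟩
  · rcases A.bip u v h with ⟨_, h4⟩ | ⟨h3, _⟩
    · exact h4 hv
    · exact h3 hu
  · exact h2 hu

lemma compG_cliqueXc {n : ℕ} (A : XYGraph n) :
    (compG A).IsClique ((A.Xᶜ : Finset (Fin n)) : Set (Fin n)) := by
  intro u hu v hv hne
  simp only [Finset.coe_compl, Set.mem_compl_iff, Finset.mem_coe] at hu hv
  exact Or.inr ⟨hne, hu, hv⟩

lemma compG_split {n : ℕ} (A : XYGraph n) : IsSplit (compG A) :=
  ⟨A.Xᶜ, A.X, disjoint_compl_left, compl_union_self' A.X, compG_cliqueXc A, compG_stableX A⟩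

lemma KS_K_eq_compl {n : ℕ} {G : SimpleGraph (Fin n)} {K S : Finset (Fin n)}
    (h : IsKSPartition G K S) : K = Sᶜ := by
  obtain ⟨hd, hu, -, -⟩ := h
  ext x
  simp only [Finset.mem_compl]
  constructor
  · intro hx hxs
    exact (Finset.disjoint_left.mp hd hx) hxs
  · intro hx
    have hmem : x ∈ K ∪ S := hu ▸ Finset.mem_univ x
    rcases Finset.mem_union.mp hmem with h | h
    · exact h
    · exact absurd h hx

lemma diff_subsingleton {n : ℕ} {G : SimpleGraph (Fin n)} {S S' : Finset (Fin n)}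
    (hst : IsStableSet G (S : Set (Fin n))) (hcl' : G.IsClique ((S'ᶜ : Finset (Fin n)) : Set (Fin n))) :
    ∀ x ∈ S \ S', ∀ y ∈ S \ S', x = y := by
  intro x hx y hy
  by_contra hne
  simp only [Finset.mem_sdiff] at hx hy
  have hadj : G.Adj x y := hcl' (memc hx.2) (memc hy.2) hne
  exact hst (Finset.mem_coe.mpr hx.1) (Finset.mem_coe.mpr hy.1) hne hadj

lemma exists_swap_data {n : ℕ} {G : SimpleGraph (Fin n)} {S S' : Finset (Fin n)}
    (hcl : G.IsClique ((Sᶜ : Finset (Fin n)) : Set (Fin n))) (hst : IsStableSet G (S : Set (Fin n)))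
    (hcl' : G.IsClique ((S'ᶜ : Finset (Fin n)) : Set (Fin n))) (hst' : IsStableSet G (S' : Set (Fin n)))
    (ni : ∀ k, k ∉ S → ∃ s ∈ S, G.Adj k s)
    (ni' : ∀ k, k ∉ S' → ∃ s ∈ S', G.Adj k s)
    (hne : S ≠ S') :
    ∃ a b, a ∈ S ∧ a ∉ S' ∧ b ∈ S' ∧ b ∉ S ∧ S.erase a = S'.erase b := by
  have hsub : ∀ x ∈ S \ S', ∀ y ∈ S \ S', x = y := diff_subsingleton hst hcl'
  have hsub' : ∀ x ∈ S' \ S, ∀ y ∈ S' \ S, x = y := diff_subsingleton hst' hcl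
  have h1 : ¬ S ⊆ S' := by
    intro hss
    obtain ⟨b, hb', hb⟩ := Finset.exists_of_ssubset (hss.ssubset_of_ne hne)
    obtain ⟨s, hs, hadj⟩ := ni b hb
    exact hst' (Finset.mem_coe.mpr (hss hs)) (Finset.mem_coe.mpr hb')
      (G.ne_of_adj hadj).symm hadj.symm
  have h2 : ¬ S' ⊆ S := by
    intro hss
    obtain ⟨a, ha, ha'⟩ := Finset.exists_of_ssubset (hss.ssubset_of_ne (Ne.symm hne))
    obtain ⟨s, hs, hadj⟩ := ni' a ha'
    exact hst (Finset.mem_coe.mpr (hss hs)) (Finset.mem_coe.mpr ha)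
      (G.ne_of_adj hadj).symm hadj.symm
  obtain ⟨a, haS, haS'⟩ := Finset.not_subset.mp h1
  obtain ⟨b, hbS', hbS⟩ := Finset.not_subset.mp h2
  refine ⟨a, b, haS, haS', hbS', hbS, ?_⟩
  ext x
  simp only [Finset.mem_erase]
  constructor
  · rintro ⟨hxa, hxS⟩
    have hxS' : x ∈ S' := by
      by_contra hx
      exact hxa (hsub x (Finset.mem_sdiff.mpr ⟨hxS, hx⟩) a (Finset.mem_sdiff.mpr ⟨haS, haS'⟩))
    exact ⟨fun h => hbS (h ▸ hxS), hxS'⟩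
  · rintro ⟨hxb, hxS'⟩
    have hxS : x ∈ S := by
      by_contra hx
      exact hxb (hsub' x (Finset.mem_sdiff.mpr ⟨hxS', hx⟩) b (Finset.mem_sdiff.mpr ⟨hbS', hbS⟩))
    exact ⟨fun h => haS' (h ▸ hxS'), hxS⟩

lemma swap_adj {n : ℕ} {G : SimpleGraph (Fin n)} {S S' : Finset (Fin n)} {a b : Fin n}
    (hcl : G.IsClique ((Sᶜ : Finset (Fin n)) : Set (Fin n)))
    (hst' : IsStableSet G (S' : Set (Fin n)))
    (haS : a ∈ S) (hbS' : b ∈ S') (hbS : b ∉ S) (hT : S.erase a = S'.erase b) :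
    ∀ u v, ¬ (u ∈ S ↔ v ∈ S) → G.Adj u v →
      G.Adj (Equiv.swap a b u) (Equiv.swap a b v) := by
  intro u v hxor hadj
  by_cases hua : u = a
  · rw [hua] at hadj hxor ⊢
    by_cases hvb : v = b
    · rw [hvb] at hadj ⊢
      rw [Equiv.swap_apply_left, Equiv.swap_apply_right]
      exact hadj.symm
    · by_cases hva : v = a
      · rw [hva] at hxor
        exact absurd Iff.rfl hxor
      · have hvS : v ∉ S := fun h => hxor ⟨fun _ => h, fun _ => haS⟩
        rw [Equiv.swap_apply_left, Equiv.swap_apply_of_ne_of_ne hva hvb]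
        exact hcl (memc hbS) (memc hvS) (fun h => hvb h.symm)
  · by_cases hub : u = b
    · rw [hub] at hadj hxor ⊢
      by_cases hva : v = a
      · rw [hva] at hadj ⊢
        rw [Equiv.swap_apply_left, Equiv.swap_apply_right]
        exact hadj.symm
      · by_cases hvb : v = b
        · rw [hvb] at hxor
          exact absurd Iff.rfl hxor
        · have hvS : v ∈ S := by
            by_contra h
            exact hxor ⟨fun h' => absurd h' hbS, fun h' => absurd h' h⟩
          have hvS' : v ∈ S' := by
            have hmem : v ∈ S.erase a := Finset.mem_erase.mpr ⟨hva, hvS⟩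
            rw [hT] at hmem
            exact (Finset.mem_erase.mp hmem).2
          exact absurd hadj (hst' (Finset.mem_coe.mpr hbS') (Finset.mem_coe.mpr hvS')
            (fun h => hvb h.symm))
    · by_cases hva : v = a
      · rw [hva] at hadj hxor ⊢
        have huS : u ∉ S := fun h => hxor ⟨fun _ => haS, fun _ => h⟩
        rw [Equiv.swap_apply_left, Equiv.swap_apply_of_ne_of_ne hua hub]
        exact hcl (memc huS) (memc hbS) hub
      · by_cases hvb : v = b
        · rw [hvb] at hadj hxor ⊢
          have huS : u ∈ S := by
            by_contra h
            exact hxor ⟨fun h' => absurd h' h, fun h' => absurd h' hbS⟩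
          have huS' : u ∈ S' := by
            have hmem : u ∈ S.erase a := Finset.mem_erase.mpr ⟨hua, huS⟩
            rw [hT] at hmem
            exact (Finset.mem_erase.mp hmem).2
          exact absurd hadj (hst' (Finset.mem_coe.mpr huS') (Finset.mem_coe.mpr hbS') hub)
        · rw [Equiv.swap_apply_of_ne_of_ne hua hub, Equiv.swap_apply_of_ne_of_ne hva hvb]
          exact hadj

lemma swap_xyiso {n : ℕ} {G : SimpleGraph (Fin n)} {S S' : Finset (Fin n)}
    (h : IsKSPartition G Sᶜ S) (h' : IsKSPartition G S'ᶜ S')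
    (ni : ∀ k, k ∉ S → ∃ s ∈ S, G.Adj k s)
    (ni' : ∀ k, k ∉ S' → ∃ s ∈ S', G.Adj k s) :
    ∃ e : (derXY G S).G ≃g (derXY G S').G, ∀ v, v ∈ S ↔ e v ∈ S' := by
  obtain ⟨-, -, hcl, hst⟩ := h
  obtain ⟨-, -, hcl', hst'⟩ := h'
  by_cases hne : S = S'
  · subst hne
    exact ⟨⟨Equiv.refl _, Iff.rfl⟩, fun v => Iff.rfl⟩
  · obtain ⟨a, b, haS, haS', hbS', hbS, hT⟩ := exists_swap_data hcl hst hcl' hst' ni ni' hne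
    have hmem : ∀ u, u ∈ S ↔ Equiv.swap a b u ∈ S' := by
      intro u
      by_cases hua : u = a
      · subst hua; rw [Equiv.swap_apply_left]; exact ⟨fun _ => hbS', fun _ => haS⟩
      · by_cases hub : u = b
        · subst hub; rw [Equiv.swap_apply_right]
          exact ⟨fun h => absurd h hbS, fun h => absurd h haS'⟩
        · rw [Equiv.swap_apply_of_ne_of_ne hua hub]
          constructor
          · intro h
            have hmem : u ∈ S.erase a := Finset.mem_erase.mpr ⟨hua, h⟩
            rw [hT] at hmem
            exact (Finset.mem_erase.mp hmem).2
          · intro h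
            have hmem : u ∈ S'.erase b := Finset.mem_erase.mpr ⟨hub, h⟩
            rw [← hT] at hmem
            exact (Finset.mem_erase.mp hmem).2
    have key := swap_adj hcl hst' haS hbS' hbS hT
    have key' := swap_adj hcl' hst hbS' haS haS' hT.symm
    refine ⟨⟨Equiv.swap a b, @fun u v => ?_⟩, fun v => hmem v⟩
    show (G.Adj (Equiv.swap a b u) (Equiv.swap a b v) ∧
        ¬ (Equiv.swap a b u ∈ S' ↔ Equiv.swap a b v ∈ S')) ↔
      (G.Adj u v ∧ ¬ (u ∈ S ↔ v ∈ S))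
    constructor
    · rintro ⟨h1, h2⟩
      have hx : ¬ (u ∈ S ↔ v ∈ S) :=
        fun hh => h2 (((hmem u).symm.trans hh).trans (hmem v))
      refine ⟨?_, hx⟩
      have h3 := key' _ _ h2 h1
      rwa [Equiv.swap_comm, Equiv.swap_apply_self, Equiv.swap_apply_self] at h3
    · rintro ⟨h1, h2⟩
      exact ⟨key u v h2 h1, fun hh => h2 (((hmem u).trans hh).trans (hmem v).symm)⟩

def compG_iso {n : ℕ} {A B : XYGraph n} (e : A.G ≃g B.G)
    (he : ∀ v, v ∈ A.X ↔ e v ∈ B.X) : compG A ≃g compG B := by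
  refine ⟨e.toEquiv, @fun u v => ?_⟩
  show (B.G.Adj (e u) (e v) ∨ (e u ≠ e v ∧ e u ∉ B.X ∧ e v ∉ B.X)) ↔
    (A.G.Adj u v ∨ (u ≠ v ∧ u ∉ A.X ∧ v ∉ A.X))
  constructor
  · rintro (h | ⟨h1, h2, h3⟩)
    · exact Or.inl (e.map_rel_iff.mp h)
    · exact Or.inr ⟨fun h => h1 (congrArg e h), fun h => h2 ((he u).mp h),
        fun h => h3 ((he v).mp h)⟩
  · rintro (h | ⟨h1, h2, h3⟩)
    · exact Or.inl (e.map_rel_iff.mpr h)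
    · exact Or.inr ⟨fun h => h1 (e.toEquiv.injective h), fun h => h2 ((he u).mpr h),
        fun h => h3 ((he v).mpr h)⟩

lemma splitIsoRel_equivalence (n : ℕ) : Equivalence (SplitIsoRel n) := by
  constructor
  · intro G; exact ⟨⟨Equiv.refl _, Iff.rfl⟩⟩
  · intro G H h; obtain ⟨e⟩ := h; exact ⟨e.symm⟩
  · intro G H K h1 h2; obtain ⟨e⟩ := h1; obtain ⟨f⟩ := h2; exact ⟨e.trans f⟩

def psi0 {n : ℕ} (A : {A : XYGraph n // NoIsolateY A}) : {G : SimpleGraph (Fin n) // IsSplit G} :=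
  ⟨compG A.1, compG_split A.1⟩

def psi (n : ℕ) : Quot (XYnRel n) → Quot (SplitIsoRel n) :=
  Quot.lift (fun A => Quot.mk _ (psi0 A)) (by
    intro A B h
    obtain ⟨e, he⟩ := h
    exact Quot.sound ⟨compG_iso e he⟩)

lemma exists_max_partition {n : ℕ} {G : SimpleGraph (Fin n)} (hG : IsSplit G) :
    ∃ S : Finset (Fin n), IsKSPartition G Sᶜ S ∧ ∀ k, k ∉ S → ∃ s ∈ S, G.Adj k s := by
  classical
  obtain ⟨K, S0, hKS⟩ := hG
  have hKS0 : IsKSPartition G S0ᶜ S0 := by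
    have hK := KS_K_eq_compl hKS
    rwa [hK] at hKS
  set P : Finset (Finset (Fin n)) :=
    Finset.univ.filter (fun S : Finset (Fin n) => IsKSPartition G Sᶜ S) with hP
  have hne : P.Nonempty := ⟨S0, by simp [hP, hKS0]⟩
  obtain ⟨S, hSP, hmax⟩ := Finset.exists_max_image P (fun S => S.card) hne
  have hS : IsKSPartition G Sᶜ S := by
    simp only [hP, Finset.mem_filter] at hSP
    exact hSP.2
  refine ⟨S, hS, ?_⟩
  intro k hk
  by_contra hno
  push_neg at hno
  have hins : IsKSPartition G (insert k S)ᶜ (insert k S) := by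
    refine ⟨disjoint_compl_left, compl_union_self' _, ?_, ?_⟩
    · apply hS.2.2.1.subset
      intro x hx
      simp only [Finset.coe_compl, Set.mem_compl_iff, Finset.mem_coe] at hx ⊢
      exact fun hxs => hx (Finset.mem_insert_of_mem hxs)
    · intro x hx y hy hne' hadj
      simp only [Finset.coe_insert, Set.mem_insert_iff, Finset.mem_coe] at hx hy
      rcases hx with rfl | hx
      · rcases hy with rfl | hy
        · exact hne' rfl
        · exact hno y hy hadj
      · rcases hy with rfl | hy
        · exact hno x hx hadj.symm
        · exact hS.2.2.2 (Finset.mem_coe.mpr hx) (Finset.mem_coe.mpr hy) hne' hadj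
  have hmem : insert k S ∈ P := by
    rw [hP]
    exact Finset.mem_filter.mpr ⟨Finset.mem_univ _, hins⟩
  have hle := hmax _ hmem
  rw [Finset.card_insert_of_notMem hk] at hle
  omega

lemma compG_derXY {n : ℕ} {G : SimpleGraph (Fin n)} {S : Finset (Fin n)}
    (hcl : G.IsClique ((Sᶜ : Finset (Fin n)) : Set (Fin n)))
    (hst : IsStableSet G (S : Set (Fin n))) :
    compG (derXY G S) = G := by
  ext u v
  show ((G.Adj u v ∧ ¬ (u ∈ S ↔ v ∈ S)) ∨ (u ≠ v ∧ u ∉ S ∧ v ∉ S)) ↔ G.Adj u v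
  constructor
  · rintro (⟨h, -⟩ | ⟨h1, h2, h3⟩)
    · exact h
    · exact hcl (memc h2) (memc h3) h1
  · intro h
    by_cases hu : u ∈ S <;> by_cases hv : v ∈ S
    · exact absurd h (hst (Finset.mem_coe.mpr hu) (Finset.mem_coe.mpr hv) (G.ne_of_adj h))
    · exact Or.inl ⟨h, fun hh => hv (hh.mp hu)⟩
    · exact Or.inl ⟨h, fun hh => hu (hh.mpr hv)⟩
    · exact Or.inr ⟨G.ne_of_adj h, hu, hv⟩

lemma derXY_noIsolate {n : ℕ} {G : SimpleGraph (Fin n)} {S : Finset (Fin n)}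
    (ni : ∀ k, k ∉ S → ∃ s ∈ S, G.Adj k s) : NoIsolateY (derXY G S) := by
  intro v hv
  obtain ⟨s, hs, hadj⟩ := ni v hv
  exact ⟨s, hs, hadj.symm, fun hh => hv (hh.mp hs)⟩

lemma derXY_compG {n : ℕ} (A : XYGraph n) : (derXY (compG A) A.X).G = A.G := by
  ext u v
  show ((A.G.Adj u v ∨ (u ≠ v ∧ u ∉ A.X ∧ v ∉ A.X)) ∧ ¬ (u ∈ A.X ↔ v ∈ A.X)) ↔ A.G.Adj u v
  constructor
  · rintro ⟨h | ⟨h1, h2, h3⟩, hx⟩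
    · exact h
    · exact absurd (iff_of_false h2 h3) hx
  · intro h
    refine ⟨Or.inl h, ?_⟩
    rcases A.bip u v h with ⟨h1, h2⟩ | ⟨h1, h2⟩
    · exact fun hh => h2 (hh.mp h1)
    · exact fun hh => h1 (hh.mpr h2)

def eqIso {n : ℕ} {G H : SimpleGraph (Fin n)} (h : G = H) : G ≃g H :=
  ⟨Equiv.refl _, @fun u v => by subst h; exact Iff.rfl⟩

lemma eqIso_apply {n : ℕ} {G H : SimpleGraph (Fin n)} (h : G = H) (v : Fin n) :
    eqIso h v = v := rfl

lemma psi_injective (n : ℕ) : Function.Injective (psi n) := by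
  intro qA qB
  induction qA using Quot.ind with | _ A => ?_
  induction qB using Quot.ind with | _ B => ?_
  intro h
  have hrel : SplitIsoRel n (psi0 A) (psi0 B) :=
    (splitIsoRel_equivalence n).eqvGen_iff.mp (Quot.eq.mp h)
  obtain ⟨f⟩ := hrel
  -- f : compG A.1 ≃g compG B.1
  set GA := compG A.1 with hGA
  set GB := compG B.1 with hGB
  set S'' : Finset (Fin n) := A.1.X.image (fun x => f x) with hS''
  have hmemS'' : ∀ u, u ∈ A.1.X ↔ f u ∈ S'' := by
    intro u
    constructor
    · intro h; exact Finset.mem_image_of_mem _ h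
    · intro h
      obtain ⟨w, hw, hwe⟩ := Finset.mem_image.mp h
      have : w = u := f.toEquiv.injective hwe
      exact this ▸ hw
  have hsurjmem : ∀ x, x ∉ S'' → f.symm x ∉ A.1.X := by
    intro x hx hmem
    apply hx
    have : f (f.symm x) ∈ S'' := (hmemS'' _).mp hmem
    rwa [RelIso.apply_symm_apply] at this
  have hks'' : IsKSPartition GB S''ᶜ S'' := by
    refine ⟨disjoint_compl_left, compl_union_self' _, ?_, ?_⟩
    · intro x hx y hy hne
      have hx1 : x ∉ S'' := by simpa using hx
      have hy1 : y ∉ S'' := by simpa using hy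
      have hx0 := hsurjmem x hx1
      have hy0 := hsurjmem y hy1
      have hne0 : f.symm x ≠ f.symm y := fun hh => hne (f.toEquiv.symm.injective hh)
      have hadj : GA.Adj (f.symm x) (f.symm y) :=
        compG_cliqueXc A.1 (memc hx0) (memc hy0) hne0
      have := f.map_rel_iff.mpr hadj
      rwa [RelIso.apply_symm_apply, RelIso.apply_symm_apply] at this
    · intro x hx y hy hne hadj
      obtain ⟨x0, hx0, rfl⟩ := Finset.mem_image.mp (Finset.mem_coe.mp hx)
      obtain ⟨y0, hy0, rfl⟩ := Finset.mem_image.mp (Finset.mem_coe.mp hy)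
      have hne0 : x0 ≠ y0 := fun hh => hne (congrArg _ hh)
      exact compG_stableX A.1 (Finset.mem_coe.mpr hx0) (Finset.mem_coe.mpr hy0) hne0
        (f.map_rel_iff.mp hadj)
  have hni'' : ∀ k, k ∉ S'' → ∃ s ∈ S'', GB.Adj k s := by
    intro k hk
    have hk0 := hsurjmem k hk
    obtain ⟨u, hu, hadj⟩ := A.2 (f.symm k) hk0
    refine ⟨f u, (hmemS'' u).mp hu, ?_⟩
    have hadjA : GA.Adj (f.symm k) u := Or.inl hadj.symm
    have := f.map_rel_iff.mpr hadjA
    rwa [RelIso.apply_symm_apply] at this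
  have hksB : IsKSPartition GB B.1.Xᶜ B.1.X :=
    ⟨disjoint_compl_left, compl_union_self' _, compG_cliqueXc B.1, compG_stableX B.1⟩
  have hniB : ∀ k, k ∉ B.1.X → ∃ s ∈ B.1.X, GB.Adj k s := by
    intro k hk
    obtain ⟨u, hu, hadj⟩ := B.2 k hk
    exact ⟨u, hu, Or.inl hadj.symm⟩
  obtain ⟨e, hecond⟩ := swap_xyiso hks'' hksB hni'' hniB
  have fadj : ∀ u v : Fin n,
      (derXY GB S'').G.Adj (f u) (f v) ↔ (derXY GA A.1.X).G.Adj u v := by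
    intro u v
    show (GB.Adj (f u) (f v) ∧ ¬ (f u ∈ S'' ↔ f v ∈ S'')) ↔
      (GA.Adj u v ∧ ¬ (u ∈ A.1.X ↔ v ∈ A.1.X))
    constructor
    · rintro ⟨h1, h2⟩
      exact ⟨f.map_rel_iff.mp h1,
        fun hh => h2 (((hmemS'' u).symm.trans hh).trans (hmemS'' v))⟩
    · rintro ⟨h1, h2⟩
      exact ⟨f.map_rel_iff.mpr h1,
        fun hh => h2 (((hmemS'' u).trans hh).trans (hmemS'' v).symm)⟩
  let fder : (derXY GA A.1.X).G ≃g (derXY GB S'').G := ⟨f.toEquiv, @fun u v => fadj u v⟩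
  apply Quot.sound
  refine ⟨(((eqIso (derXY_compG A.1).symm).trans fder).trans e).trans
    (eqIso (derXY_compG B.1)), fun v => ?_⟩
  show v ∈ A.1.X ↔ e (f v) ∈ B.1.X
  exact (hmemS'' v).trans (hecond (f v))

lemma psi_surjective (n : ℕ) : Function.Surjective (psi n) := by
  intro q
  induction q using Quot.ind with | _ G => ?_
  obtain ⟨S, hKS, ni⟩ := exists_max_partition G.2
  refine ⟨Quot.mk _ ⟨derXY G.1 S, derXY_noIsolate ni⟩, ?_⟩
  exact congrArg (Quot.mk _) (Subtype.ext (compG_derXY hKS.2.2.1 hKS.2.2.2))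

end Aux

/-- There is a bijection between isomorphism classes of split graphs on `n` vertices
and isomorphism classes of XY-graphs on `n` vertices with no isolates in `Y`. -/
theorem split_xy_bijection (n : ℕ) :
    Nonempty (Quot (SplitIsoRel n) ≃ Quot (XYnRel n)) :=
  ⟨(Equiv.ofBijective (psi n) ⟨psi_injective n, psi_surjective n⟩).symm⟩
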